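/- Let f be a nonzero homogeneous polynomial of degree d in variables x_1,...,x_N over an algebraically closed field, defining a hypersurface Y = V(f) in ℙ^{N-1}, and embed ℙ^{N-1} ⊂ ℙ^N as the hyperplane {x_0 = 0}. If there exists a smooth degree-d hypersurface X in ℙ^N with Y = X ∩ ℙ^{N-1}, then Y has only isolated singularities. -/

import Mathlib

open MvPolynomial

private lemma Finsupp.degree_add' {σ : Type*} (a b : σ →₀ ℕ) :
    (a + b).degree = a.degree + b.degree := by
  simp only [Finsupp.degree_eq_weight_one, map_add]

private lemma Finsupp.degree_single' {σ : Type*} (i : σ) (n : ℕ) :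
    (Finsupp.single i n).degree = n := by
  classical
  rcases eq_or_ne n 0 with rfl | hn
  · simp [Finsupp.degree]
  · simp [Finsupp.degree_apply, Finsupp.support_single_ne_zero _ hn]

private lemma aux_eval_smul {k : Type*} [CommSemiring k] {σ : Type*} {n : ℕ}
    {p : MvPolynomial σ k} (hp : p.IsHomogeneous n) (c : k) (x : σ → k) :
    eval (c • x) p = c ^ n * eval x p := by
  conv_lhs => rw [p.as_sum]
  conv_rhs => rw [p.as_sum]
  rw [map_sum, map_sum, Finset.mul_sum]
  apply Finset.sum_congr rfl
  intro d hd
  have hdeg : d.degree = n := by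
    have := hp (mem_support_iff.mp hd)
    rwa [Finsupp.degree_eq_weight_one]
  rw [eval_monomial, eval_monomial]
  unfold Finsupp.prod
  have : ∀ i ∈ d.support, (c • x) i ^ d i = c ^ d i * x i ^ d i := by
    intro i _
    simp [mul_pow]
  rw [Finset.prod_congr rfl this, Finset.prod_mul_distrib, Finset.prod_pow_eq_pow_sum]
  have : ∑ i ∈ d.support, d i = n := hdeg ▸ rfl
  rw [this]
  ring

private lemma aux_pderiv_homog {k : Type*} [CommSemiring k] {σ : Type*} {n : ℕ}
    {p : MvPolynomial σ k} (hp : p.IsHomogeneous n) (i : σ) :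
    (pderiv i p).IsHomogeneous (n - 1) := by
  classical
  conv_lhs => rw [p.as_sum]
  rw [map_sum]
  apply IsHomogeneous.sum
  intro d hd
  rw [pderiv_monomial]
  have hdeg : d.degree = n := by
    have := hp (mem_support_iff.mp hd)
    rwa [Finsupp.degree_eq_weight_one]
  rcases eq_or_ne (d i) 0 with h0 | h0
  · rw [h0]
    simp only [Nat.cast_zero, mul_zero, map_zero]
    exact isHomogeneous_zero _ _ _
  · apply isHomogeneous_monomial
    have hle : Finsupp.single i 1 ≤ d := by
      rw [Finsupp.single_le_iff]
      omega
    have hadd : d - Finsupp.single i 1 + Finsupp.single i 1 = d := tsub_add_cancel_of_le hle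
    have := congrArg Finsupp.degree hadd
    rw [Finsupp.degree_add', Finsupp.degree_single'] at this
    omega

private lemma aux_euler {k : Type*} [CommSemiring k] {N : ℕ} {n : ℕ}
    {p : MvPolynomial (Fin N) k} (hp : p.IsHomogeneous n) :
    ∑ i : Fin N, X i * pderiv i p = n • p := by
  classical
  conv_lhs => rw [p.as_sum]
  conv_rhs => rw [p.as_sum]
  simp_rw [map_sum, Finset.mul_sum, Finset.smul_sum]
  rw [Finset.sum_comm]
  apply Finset.sum_congr rfl
  intro d hd
  have hdeg : d.degree = n := by
    have := hp (mem_support_iff.mp hd)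
    rwa [Finsupp.degree_eq_weight_one]
  have key : ∀ i : Fin N, X i * pderiv i (monomial d (coeff d p))
      = monomial d (coeff d p * d i) := by
    intro i
    rw [pderiv_monomial, X, monomial_mul, one_mul]
    rcases eq_or_ne (d i) 0 with h0 | h0
    · rw [h0]; simp
    · have hle : Finsupp.single i 1 ≤ d := by
        rw [Finsupp.single_le_iff]; omega
      rw [add_tsub_cancel_of_le hle]
  rw [Finset.sum_congr rfl (fun i _ => key i)]
  rw [← map_sum, ← Finset.mul_sum]
  have hsum : ∑ i : Fin N, (d i : k) = (n : k) := by
    rw [← Nat.cast_sum]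
    congr 1
    rw [← hdeg, Finsupp.degree]
    exact (Finset.sum_subset (Finset.subset_univ _) (by
      intro x _ hx
      simpa using Finsupp.notMem_support_iff.mp hx)).symm
  rw [hsum, smul_monomial]
  congr 1
  rw [mul_comm]
  simp [nsmul_eq_mul]

private lemma aux_chain {k : Type*} [CommSemiring k] {N : ℕ}
    (q : MvPolynomial (Fin (N + 1)) k) (i : Fin N) :
    pderiv i (aeval (Fin.cases 0 X : Fin (N + 1) → MvPolynomial (Fin N) k) q)
      = aeval (Fin.cases 0 X : Fin (N + 1) → MvPolynomial (Fin N) k) (pderiv i.succ q) := by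
  induction q using MvPolynomial.induction_on with
  | C a => rw [aeval_C, algebraMap_eq, pderiv_C, pderiv_C, map_zero]
  | add p q hp hq => rw [map_add, map_add, hp, hq, map_add, map_add]
  | mul_X p j hp =>
    rw [map_mul, pderiv_mul, pderiv_mul, map_add, map_mul, map_mul, hp]
    congr 1
    congr 1
    induction j using Fin.cases with
    | zero =>
      rw [aeval_X, Fin.cases_zero, pderiv_X_of_ne (Fin.succ_ne_zero i).symm, map_zero]
      exact (pderiv i).map_zero
    | succ j' =>
      rw [aeval_X, Fin.cases_succ]
      rcases eq_or_ne i j' with rfl | hne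
      · rw [pderiv_X_self, pderiv_X_self, map_one]
      · rw [pderiv_X_of_ne (Ne.symm hne), pderiv_X_of_ne, map_zero]
        simpa [Fin.succ_inj] using (Ne.symm hne)

private lemma aux_eval_cases {k : Type*} [CommSemiring k] {N : ℕ}
    (q : MvPolynomial (Fin (N + 1)) k) (x : Fin N → k) :
    eval x (aeval (Fin.cases 0 X : Fin (N + 1) → MvPolynomial (Fin N) k) q)
      = eval (Fin.cases 0 x) q := by
  induction q using MvPolynomial.induction_on with
  | C a => rw [aeval_C, algebraMap_eq, eval_C, eval_C]
  | add p q hp hq => rw [map_add, map_add, hp, hq, map_add]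
  | mul_X p j hp =>
    rw [map_mul, map_mul, map_mul, hp]
    congr 1
    induction j using Fin.cases with
    | zero => rw [aeval_X, Fin.cases_zero, map_zero, eval_X]; simp
    | succ j' => rw [aeval_X, Fin.cases_succ, eval_X, eval_X]; simp

private lemma aux_span_eval {k : Type*} [CommRing k] {σ : Type*} {S : Set (MvPolynomial σ k)}
    {z : MvPolynomial σ k} (hz : z ∈ Ideal.span S) (x : σ → k)
    (hS : ∀ q ∈ S, eval x q = 0) : eval x z = 0 := by
  refine Submodule.span_induction (fun q hq => hS q hq) (map_zero _) ?_ ?_ hz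
  · intro a b _ _ ha hb; rw [map_add, ha, hb, add_zero]
  · intro r a _ ha; rw [smul_eq_mul, map_mul, ha, mul_zero]

private lemma aux_homog_zero_eq_C {k : Type*} [CommSemiring k] {σ : Type*}
    {q : MvPolynomial σ k} (hq : q.IsHomogeneous 0) : q = C (coeff 0 q) := by
  classical
  have ht : q.totalDegree = 0 := le_antisymm hq.totalDegree_le (Nat.zero_le _)
  rw [totalDegree_eq_zero_iff] at ht
  ext m
  rcases eq_or_ne m 0 with rfl | hm
  · rw [coeff_C]; simp
  · rw [coeff_C, if_neg (Ne.symm hm)]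
    by_contra hc
    obtain ⟨x, hx⟩ : ∃ x, m x ≠ 0 := by
      by_contra hall
      push_neg at hall
      exact hm (Finsupp.ext hall)
    exact hx (ht m (mem_support_iff.mpr hc) x)

private lemma aux_finite_zero_set {k : Type*} [Field k] {N m : ℕ} (hm : 1 ≤ m)
    (v : Fin N → MvPolynomial (Fin N) k) (hv : ∀ i, (v i).totalDegree ≤ m - 1) :
    {y : Fin N → k | ∀ i, y i ^ m = eval y (v i)}.Finite := by
  classical
  set D : ℕ := N * (m - 1) with hD
  set J : Ideal (MvPolynomial (Fin N) k) :=
    Ideal.span (Set.range fun i => X i ^ m - v i) with hJ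
  have hred : ∀ n : ℕ, ∀ P : MvPolynomial (Fin N) k, P.totalDegree ≤ n →
      ∃ Q, Q.totalDegree ≤ D ∧ P - Q ∈ J := by
    intro n
    induction n using Nat.strong_induction_on with
    | _ n ih =>
      intro P hP
      have key : ∀ σ ∈ P.support,
          ∃ Q, Q.totalDegree ≤ D ∧ (monomial σ (coeff σ P)) - Q ∈ J := by
        intro σ hσ
        have hdsum : (σ.sum fun _ e => e) = σ.degree := rfl
        by_cases hsmall : σ.degree ≤ D
        · refine ⟨monomial σ (coeff σ P), le_trans (totalDegree_monomial_le _ _) hsmall, ?_⟩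
          rw [sub_self]; exact Ideal.zero_mem _
        · push_neg at hsmall
          obtain ⟨i, hmi⟩ : ∃ i, m ≤ σ i := by
            by_contra hc
            push_neg at hc
            have : σ.degree ≤ D := by
              rw [Finsupp.degree]
              calc ∑ j ∈ σ.support, σ j ≤ ∑ j : Fin N, σ j :=
                    Finset.sum_le_sum_of_subset (Finset.subset_univ _)
                _ ≤ ∑ _j : Fin N, (m - 1) := Finset.sum_le_sum (fun j _ => by
                    have := hc j; omega)
                _ = N * (m - 1) := by
                    rw [Finset.sum_const, Finset.card_univ, Fintype.card_fin, smul_eq_mul]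
            omega
          have hdegn : σ.degree ≤ n := le_trans (le_of_eq hdsum.symm) (le_trans (le_totalDegree hσ) hP)
          have hle : Finsupp.single i m ≤ σ := Finsupp.single_le_iff.2 hmi
          have hadd : Finsupp.single i m + (σ - Finsupp.single i m) = σ :=
            add_tsub_cancel_of_le hle
          have hdeg' : (σ - Finsupp.single i m).degree = σ.degree - m := by
            have := congrArg Finsupp.degree hadd
            rw [Finsupp.degree_add', Finsupp.degree_single'] at this
            omega
          have hσim : m ≤ σ.degree := le_trans hmi (Finsupp.le_degree i σ)
          have hbound : (v i * monomial (σ - Finsupp.single i m) (coeff σ P)).totalDegree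
              ≤ n - 1 := by
            refine le_trans (totalDegree_mul _ _) ?_
            have h1 := hv i
            have h2 : (monomial (σ - Finsupp.single i m) (coeff σ P)).totalDegree
                ≤ σ.degree - m := le_trans (totalDegree_monomial_le _ _) (le_of_eq hdeg')
            omega
          obtain ⟨Q, hQD, hQJ⟩ := ih (n - 1) (by omega) _ hbound
          refine ⟨Q, hQD, ?_⟩
          have hfact : monomial σ (coeff σ P)
              = X i ^ m * monomial (σ - Finsupp.single i m) (coeff σ P) := by
            rw [X_pow_eq_monomial, monomial_mul, one_mul, hadd]
          have hrw : monomial σ (coeff σ P) - Q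
              = (X i ^ m - v i) * monomial (σ - Finsupp.single i m) (coeff σ P)
                + (v i * monomial (σ - Finsupp.single i m) (coeff σ P) - Q) := by
            rw [hfact]; ring
          rw [hrw]
          exact Ideal.add_mem _
            (Ideal.mul_mem_right _ _ (Ideal.subset_span ⟨i, rfl⟩)) hQJ
      choose Qf hQd hQJ using key
      refine ⟨∑ σ ∈ P.support.attach, Qf σ.1 σ.2, ?_, ?_⟩
      · refine le_trans (totalDegree_finset_sum _ _) ?_
        exact Finset.sup_le (fun σ _ => hQd σ.1 σ.2)
      · have hPsum : P = ∑ σ ∈ P.support.attach, monomial σ.1 (coeff σ.1 P) := by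
          conv_lhs => rw [P.as_sum]
          exact (Finset.sum_attach _ _).symm
        have hsub : P - (∑ σ ∈ P.support.attach, Qf σ.1 σ.2)
            = ∑ σ ∈ P.support.attach, (monomial σ.1 (coeff σ.1 P) - Qf σ.1 σ.2) := by
          rw [Finset.sum_sub_distrib, ← hPsum]
        rw [hsub]
        exact Ideal.sum_mem _ (fun σ _ => hQJ σ.1 σ.2)
  have hfin : Module.Finite k (MvPolynomial (Fin N) k ⧸ J) := by
    apply Module.Finite.of_surjective
      ((Ideal.Quotient.mkₐ k J).toLinearMap ∘ₗ (restrictTotalDegree (Fin N) k D).subtype)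
    intro a
    obtain ⟨P, rfl⟩ := Ideal.Quotient.mk_surjective a
    obtain ⟨Q, hQD, hQJ⟩ := hred P.totalDegree P le_rfl
    refine ⟨⟨Q, ?_⟩, ?_⟩
    · rw [mem_restrictTotalDegree]; exact hQD
    · simp only [LinearMap.coe_comp, Function.comp_apply, Submodule.coe_subtype,
        AlgHom.toLinearMap_apply, Ideal.Quotient.mkₐ_eq_mk]
      exact Ideal.Quotient.eq.2 (by rw [← neg_sub]; exact neg_mem hQJ)
  have hroots : ∀ i : Fin N, ∃ q : Polynomial k, q ≠ 0 ∧
      ∀ y : Fin N → k, (∀ i', y i' ^ m = eval y (v i')) → Polynomial.eval (y i) q = 0 := by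
    intro i
    obtain ⟨q, hmq, hq0⟩ :=
      IsIntegral.of_finite k (Ideal.Quotient.mk J (X i : MvPolynomial (Fin N) k))
    refine ⟨q, hmq.ne_zero, ?_⟩
    have hmem : Polynomial.aeval (X i : MvPolynomial (Fin N) k) q ∈ J := by
      rw [← Ideal.Quotient.eq_zero_iff_mem]
      have h2 := Polynomial.aeval_algHom_apply (Ideal.Quotient.mkₐ k J)
        (X i : MvPolynomial (Fin N) k) q
      rw [Ideal.Quotient.mkₐ_eq_mk] at h2
      rw [← h2, Polynomial.aeval_def]
      exact hq0
    intro y hy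
    have hev : eval y (Polynomial.aeval (X i : MvPolynomial (Fin N) k) q) = 0 := by
      refine aux_span_eval hmem y ?_
      rintro _ ⟨j, rfl⟩
      rw [map_sub, map_pow, eval_X, hy j, sub_self]
    have haeq : ∀ p : MvPolynomial (Fin N) k, MvPolynomial.aeval y p = eval y p := fun p => rfl
    have h3 : MvPolynomial.aeval y (Polynomial.aeval (X i : MvPolynomial (Fin N) k) q)
        = Polynomial.aeval (MvPolynomial.aeval y (X i : MvPolynomial (Fin N) k)) q :=
      (Polynomial.aeval_algHom_apply (MvPolynomial.aeval y) _ q).symm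
    rw [haeq, hev] at h3
    rw [haeq, eval_X] at h3
    rw [← congrFun (Polynomial.coe_aeval_eq_eval (y i)) q]
    exact h3.symm
  choose q hq0 hqroot using hroots
  apply Set.Finite.subset (Set.Finite.pi (fun i => Polynomial.finite_setOf_isRoot (hq0 i)))
  intro y hy
  rw [Set.mem_pi]
  intro i _
  exact hqroot i y hy

/-- Let `f` be a nonzero homogeneous polynomial of degree `d` in the variables
`x_1, …, x_N` over an algebraically closed field of characteristic zero, defining a
hypersurface `Y = V(f) ⊆ ℙ^{N-1}`, where `ℙ^{N-1} ⊆ ℙ^N` is the hyperplane `{x_0 = 0}`.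
If there is a smooth degree-`d` hypersurface `X = V(g) ⊆ ℙ^N` (smooth: the partial
derivatives of `g` have no common nonzero zero) with `Y = X ∩ ℙ^{N-1}` (i.e. `f` is the
restriction of `g` to `{x_0 = 0}`), then `Y` has only isolated singularities: the set of
singular points of `Y` in projective space is finite. -/
theorem isolated_singularities_of_smooth_extension
    (k : Type*) [Field k] [IsAlgClosed k] [CharZero k]
    (N d : ℕ) (hd : 1 ≤ d)
    (f : MvPolynomial (Fin N) k) (hf : f.IsHomogeneous d) (hf0 : f ≠ 0)
    (g : MvPolynomial (Fin (N + 1)) k) (hg : g.IsHomogeneous d)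
    (hres : aeval (Fin.cases 0 X : Fin (N + 1) → MvPolynomial (Fin N) k) g = f)
    (hsmooth : ∀ x : Fin (N + 1) → k, x ≠ 0 →
      (∀ i, eval x (pderiv i g) = 0) → False) :
    Set.Finite {p : Projectivization k (Fin N → k) |
      eval p.rep f = 0 ∧ ∀ i, eval p.rep (pderiv i f) = 0} := by
  classical
  have hpdf : ∀ j : Fin N, (pderiv j f).IsHomogeneous (d - 1) := fun j => aux_pderiv_homog hf j
  set h : MvPolynomial (Fin N) k :=
    aeval (Fin.cases 0 X : Fin (N + 1) → MvPolynomial (Fin N) k) (pderiv (0 : Fin (N + 1)) g)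
    with hh_def
  have hpd : ∀ (x : Fin N → k) (i : Fin N),
      eval (Fin.cases 0 x) (pderiv i.succ g) = eval x (pderiv i f) := by
    intro x i
    rw [← aux_eval_cases, ← aux_chain, hres]
  have hkey : ∀ x : Fin N → k, x ≠ 0 → (∀ i, eval x (pderiv i f) = 0) → eval x h ≠ 0 := by
    intro x hx h0 hcontra
    apply hsmooth (Fin.cases 0 x)
    · intro hzero
      apply hx
      funext j
      have := congrFun hzero j.succ
      simpa using this
    · intro i
      induction i using Fin.cases with
      | zero => rw [← aux_eval_cases]; exact hcontra
      | succ j => rw [hpd]; exact h0 j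
  rcases eq_or_lt_of_le hd with hd1 | hd2
  · have hempty : {p : Projectivization k (Fin N → k) |
        eval p.rep f = 0 ∧ ∀ i, eval p.rep (pderiv i f) = 0} = ∅ := by
      ext p
      simp only [Set.mem_setOf_eq, Set.mem_empty_iff_false, iff_false, not_and]
      intro _ hsing
      have hzero : ∀ j, pderiv j f = (0 : MvPolynomial (Fin N) k) := by
        intro j
        have h0 : (pderiv j f).IsHomogeneous 0 := by
          have := hpdf j
          rwa [← hd1] at this
        have hC := aux_homog_zero_eq_C h0
        have hev := hsing j
        rw [hC, eval_C] at hev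
        rw [hC, hev, map_zero]
      have heuler := aux_euler hf
      rw [← hd1] at heuler
      simp only [hzero, mul_zero, Finset.sum_const_zero, one_smul] at heuler
      exact hf0 heuler.symm
    rw [hempty]
    exact Set.finite_empty
  · set e := d - 1 with he_def
    have he : 1 ≤ e := by omega
    have hepd : ∀ j, (pderiv j f).IsHomogeneous e := hpdf
    have hhom_h : h.IsHomogeneous e := by
      have h1 : (pderiv (0 : Fin (N + 1)) g).IsHomogeneous e := aux_pderiv_homog hg 0
      have h2 : ∀ i : Fin (N + 1),
          ((Fin.cases 0 X : Fin (N + 1) → MvPolynomial (Fin N) k) i).IsHomogeneous 1 := by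
        intro i
        induction i using Fin.cases with
        | zero =>
          simp only [Fin.cases_zero]
          exact isHomogeneous_zero _ _ _
        | succ j =>
          simp only [Fin.cases_succ]
          exact isHomogeneous_X _ _
      have := h1.aeval _ h2
      rwa [one_mul] at this
    set I' : Ideal (MvPolynomial (Fin N) k) :=
      Ideal.span (insert h (Set.range fun j => pderiv j f)) with hI'
    have hzl : MvPolynomial.zeroLocus k I' ⊆ {0} := by
      intro x hx
      by_contra hx0
      simp only [Set.mem_singleton_iff] at hx0
      have hgen : ∀ q ∈ insert h (Set.range fun j => pderiv j f), eval x q = 0 :=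
        fun q hq => hx q (Ideal.subset_span hq)
      exact hkey x hx0 (fun i => hgen _ (Set.mem_insert_of_mem _ ⟨i, rfl⟩))
        (hgen h (Set.mem_insert _ _))
    have hrad : ∀ i : Fin N, ∃ n, (X i : MvPolynomial (Fin N) k) ^ n ∈ I' := by
      intro i
      have hXi : (X i : MvPolynomial (Fin N) k) ∈ I'.radical := by
        rw [← vanishingIdeal_zeroLocus_eq_radical (K := k), mem_vanishingIdeal_iff]
        intro x hx
        have := hzl hx
        simp only [Set.mem_singleton_iff] at this
        rw [this, aeval_X]
        rfl
      exact hXi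
    choose M hM using hrad
    set m := e + Finset.univ.sup M with hm_def
    have hm : ∀ i, (X i : MvPolynomial (Fin N) k) ^ m ∈ I' := by
      intro i
      have hle : M i ≤ m := le_trans (Finset.le_sup (Finset.mem_univ i)) (by omega)
      have hsplit : (X i : MvPolynomial (Fin N) k) ^ m = X i ^ (m - M i) * X i ^ M i := by
        rw [← pow_add]
        congr 1
        omega
      rw [hsplit]
      exact Ideal.mul_mem_left _ _ (hM i)
    have hem : e ≤ m := by omega
    have hm1 : 1 ≤ m := by omega
    have hBz : ∀ i : Fin N, ∃ B z, z ∈ Ideal.span (Set.range fun j => pderiv j f) ∧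
        (X i : MvPolynomial (Fin N) k) ^ m = B * h + z := by
      intro i
      obtain ⟨a, z, hz, heq⟩ := Submodule.mem_span_insert.1 (hm i)
      exact ⟨a, z, hz, by rw [heq, smul_eq_mul]⟩
    choose B z hzmem hBzeq using hBz
    set cone : Set (Fin N → k) := {x | ∀ j, eval x (pderiv j f) = 0} with hcone_def
    have hconeeq : ∀ x ∈ cone, ∀ i, (x i) ^ m = eval x (B i) * eval x h := by
      intro x hx i
      have hev := congrArg (eval x) (hBzeq i)
      rw [map_add, map_mul, map_pow, eval_X] at hev
      rw [hev, aux_span_eval (hzmem i) x (by rintro _ ⟨j, rfl⟩; exact hx j), add_zero]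
    set v : Fin N → MvPolynomial (Fin N) k := fun i => homogeneousComponent (m - e) (B i)
      with hv_def
    have hv_deg : ∀ i, (v i).totalDegree ≤ m - 1 := fun i =>
      le_trans (homogeneousComponent_isHomogeneous (m - e) (B i)).totalDegree_le (by omega)
    have hsmul_cone : ∀ x ∈ cone, ∀ c : k, c • x ∈ cone := by
      intro x hx c j
      rw [aux_eval_smul (hepd j) c x, hx j, mul_zero]
    have hv_eval : ∀ x ∈ cone, ∀ i, (x i) ^ m = eval x (v i) * eval x h := by
      intro x hx i
      set T := (B i).totalDegree with hT
      set p₁ : Polynomial k := Polynomial.C ((x i) ^ m) * Polynomial.X ^ m with hp₁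
      set p₂ : Polynomial k := ∑ j ∈ Finset.range (T + 1),
          Polynomial.C (eval x (homogeneousComponent j (B i)) * eval x h) * Polynomial.X ^ (j + e)
        with hp₂
      have hagree : ∀ c : k, p₁.eval c = p₂.eval c := by
        intro c
        have h1 := hconeeq (c • x) (hsmul_cone x hx c) i
        have hL : ((c • x) i) ^ m = c ^ m * (x i) ^ m := by
          simp [mul_pow]
        have hB : eval (c • x) (B i) = ∑ j ∈ Finset.range (T + 1),
            c ^ j * eval x (homogeneousComponent j (B i)) := by
          conv_lhs => rw [← sum_homogeneousComponent (B i), map_sum]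
          exact Finset.sum_congr rfl
            (fun j _ => aux_eval_smul (homogeneousComponent_isHomogeneous j _) c x)
        have hH : eval (c • x) h = c ^ e * eval x h := aux_eval_smul hhom_h c x
        rw [hL, hB, hH] at h1
        rw [hp₁, hp₂]
        simp only [Polynomial.eval_mul, Polynomial.eval_pow, Polynomial.eval_C,
          Polynomial.eval_X, Polynomial.eval_finset_sum]
        rw [mul_comm (x i ^ m) (c ^ m), h1, Finset.sum_mul]
        apply Finset.sum_congr rfl
        intro j _
        rw [pow_add]
        ring
      have hpq : p₁ = p₂ := Polynomial.funext hagree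
      have hco := congrArg (fun pp => Polynomial.coeff pp m) hpq
      simp only [hp₁, hp₂, Polynomial.coeff_C_mul, Polynomial.coeff_X_pow, if_pos rfl, if_true,
        mul_one, Polynomial.finset_sum_coeff] at hco
      have hco2 : (x i) ^ m = ∑ j ∈ Finset.range (T + 1),
          (if j = m - e then eval x (homogeneousComponent j (B i)) * eval x h else 0) := by
        rw [hco]
        apply Finset.sum_congr rfl
        intro j _
        rw [mul_ite, mul_one, mul_zero]
        exact if_congr (by omega) rfl rfl
      rw [Finset.sum_ite_eq' (Finset.range (T + 1)) (m - e)
        (fun j => eval x (homogeneousComponent j (B i)) * eval x h)] at hco2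
      by_cases hmem : m - e ∈ Finset.range (T + 1)
      · rw [if_pos hmem] at hco2
        exact hco2
      · rw [if_neg hmem] at hco2
        have hvz : v i = 0 := by
          apply homogeneousComponent_eq_zero
          simp only [Finset.mem_range] at hmem
          omega
        rw [hvz, map_zero, zero_mul]
        exact hco2
    have hT := aux_finite_zero_set hm1 v hv_deg
    have hchoice : ∀ p : Projectivization k (Fin N → k), ∃ c : k, c ^ e = (eval p.rep h)⁻¹ :=
      fun p => IsAlgClosed.exists_pow_nat_eq _ (by omega)
    choose c hc using hchoice
    apply Set.Finite.of_finite_image (f := fun p => c p • p.rep)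
    · apply hT.subset
      rintro _ ⟨p, hp, rfl⟩
      obtain ⟨hpf, hpsing⟩ := hp
      have hx0 : p.rep ≠ 0 := Projectivization.rep_nonzero p
      have hhx : eval p.rep h ≠ 0 := hkey _ hx0 hpsing
      have hcone : (c p • p.rep) ∈ cone := hsmul_cone _ (fun j => hpsing j) _
      intro i
      have hone : eval (c p • p.rep) h = 1 := by
        rw [aux_eval_smul hhom_h, hc, inv_mul_cancel₀ hhx]
      have := hv_eval _ hcone i
      rw [this, hone, mul_one]
    · intro p hp q hq heq
      have hhp : eval p.rep h ≠ 0 := hkey _ (Projectivization.rep_nonzero p) hp.2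
      have hhq : eval q.rep h ≠ 0 := hkey _ (Projectivization.rep_nonzero q) hq.2
      have hcp : c p ≠ 0 := by
        intro h0
        apply inv_ne_zero hhp
        rw [← hc p, h0, zero_pow (by omega)]
      have hcq : c q ≠ 0 := by
        intro h0
        apply inv_ne_zero hhq
        rw [← hc q, h0, zero_pow (by omega)]
      rw [← Projectivization.mk_rep p, ← Projectivization.mk_rep q,
        Projectivization.mk_eq_mk_iff']
      have heq2 : c p • p.rep = c q • q.rep := heq
      refine ⟨(c p)⁻¹ * c q, ?_⟩
      rw [mul_smul, ← heq2, smul_smul, inv_mul_cancel₀ hcp, one_smul]
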